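/- arXiv:1804.05460 — 4 statements merged into one kernel-verified Lean document; each statement's English description precedes it below -/
import Mathlib

section
/- With Z as above and a permutation σ of {1,...,n}, setting t_{ij} = 1 if (i,j) is an inversion of σ (i.e. σ^{-1}(i) > σ^{-1}(j) appropriately ordered) and t_{ij} = 0 otherwise, the resulting point of Z equals v_σ = ∑_{j=2}^n (∑_{i<j} c_{σ_i σ_j}) e_{σ_j}. In particular, for each permutation σ, the point v_σ = c_{σ₁σ₂} e_{σ₂} + c_{{σ₁,σ₂}|σ₃} e_{σ₃} + ⋯ + c_{{σ₁,...,σ_{n-1}}|σ_n} e_{σ_n} lies in Z. -/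
open Finset

theorem stmt_5 (n : ℕ) (c : Fin n → Fin n → ℝ)
    (hsym : ∀ i j, c i j = c j i) (hnn : ∀ i j, 0 ≤ c i j)
    (σ : Equiv.Perm (Fin n)) :
    (∑ i : Fin n, ∑ j : Fin n,
        if i < j then c i j •
          ((if σ.symm j < σ.symm i then (1 : ℝ) else 0) • (Pi.single i 1 : Fin n → ℝ)
            + (1 - if σ.symm j < σ.symm i then (1 : ℝ) else 0) •
                (Pi.single j 1 : Fin n → ℝ))
        else 0)
      = (∑ j : Fin n, (∑ i ∈ Finset.univ.filter (· < j), c (σ i) (σ j)) •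
          (Pi.single (σ j) 1 : Fin n → ℝ)) ∧
    (∑ j : Fin n, (∑ i ∈ Finset.univ.filter (· < j), c (σ i) (σ j)) •
          (Pi.single (σ j) 1 : Fin n → ℝ)) ∈
      {x : Fin n → ℝ | ∃ t : Fin n → Fin n → ℝ,
        (∀ i j, 0 ≤ t i j ∧ t i j ≤ 1) ∧
        x = ∑ i : Fin n, ∑ j : Fin n,
          if i < j then c i j • (t i j • (Pi.single i 1 : Fin n → ℝ)
            + (1 - t i j) • (Pi.single j 1 : Fin n → ℝ)) else 0} := by
  have key : (∑ i : Fin n, ∑ j : Fin n,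
        if i < j then c i j •
          ((if σ.symm j < σ.symm i then (1 : ℝ) else 0) • (Pi.single i 1 : Fin n → ℝ)
            + (1 - if σ.symm j < σ.symm i then (1 : ℝ) else 0) •
                (Pi.single j 1 : Fin n → ℝ))
        else 0)
      = (∑ j : Fin n, (∑ i ∈ Finset.univ.filter (· < j), c (σ i) (σ j)) •
          (Pi.single (σ j) 1 : Fin n → ℝ)) := by
    have step1 : (∑ i : Fin n, ∑ j : Fin n,
        if i < j then c i j •
          ((if σ.symm j < σ.symm i then (1 : ℝ) else 0) • (Pi.single i 1 : Fin n → ℝ)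
            + (1 - if σ.symm j < σ.symm i then (1 : ℝ) else 0) •
                (Pi.single j 1 : Fin n → ℝ))
        else 0)
      = ∑ i : Fin n, ∑ j : Fin n,
          ((if i < j ∧ σ.symm j < σ.symm i then c i j • (Pi.single i 1 : Fin n → ℝ) else 0)
            + (if i < j ∧ σ.symm i < σ.symm j then c i j • (Pi.single j 1 : Fin n → ℝ) else 0)) := by
      refine Finset.sum_congr rfl fun i _ => Finset.sum_congr rfl fun j _ => ?_
      by_cases hij : i < j
      · have hne : σ.symm i ≠ σ.symm j := fun h => hij.ne (σ.symm.injective h)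
        by_cases hinv : σ.symm j < σ.symm i
        · have h2 : ¬ σ.symm i < σ.symm j := asymm hinv
          simp [hij, hinv, h2]
        · have h2 : σ.symm i < σ.symm j := lt_of_le_of_ne (not_lt.1 hinv) hne
          simp [hij, hinv, h2]
      · simp [hij, fun h : i < j ∧ _ => hij h.1]
    have step2 : (∑ i : Fin n, ∑ j : Fin n,
          ((if i < j ∧ σ.symm j < σ.symm i then c i j • (Pi.single i 1 : Fin n → ℝ) else 0)
            + (if i < j ∧ σ.symm i < σ.symm j then c i j • (Pi.single j 1 : Fin n → ℝ) else 0)))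
        = ∑ i : Fin n, ∑ j : Fin n,
            (if σ.symm i < σ.symm j then c i j • (Pi.single j 1 : Fin n → ℝ) else 0) := by
      rw [Finset.sum_congr rfl fun i _ => Finset.sum_add_distrib, Finset.sum_add_distrib]
      rw [Finset.sum_comm (γ := Fin n) (s := Finset.univ) (t := Finset.univ)]
      rw [← Finset.sum_add_distrib]
      refine Finset.sum_congr rfl fun i _ => ?_
      rw [← Finset.sum_add_distrib]
      refine Finset.sum_congr rfl fun j _ => ?_
      -- term : (if j < i ∧ σ.symm i < σ.symm j then c j i • single j else 0)
      --      + (if i < j ∧ σ.symm i < σ.symm j then c i j • single j else 0)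
      by_cases hord : σ.symm i < σ.symm j
      · have hne : i ≠ j := fun h => hord.ne (by rw [h])
        rcases hne.lt_or_gt with h | h
        · have h' : ¬ j < i := asymm h
          simp [h, h', hord, hsym j i]
        · have h' : ¬ i < j := asymm h
          simp [h, h', hord, hsym j i]
      · simp [hord]
    have step3 : (∑ i : Fin n, ∑ j : Fin n,
            (if σ.symm i < σ.symm j then c i j • (Pi.single j 1 : Fin n → ℝ) else 0))
        = ∑ k : Fin n, ∑ l : Fin n,
            (if k < l then c (σ k) (σ l) • (Pi.single (σ l) 1 : Fin n → ℝ) else 0) := by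
      refine (Fintype.sum_equiv σ _ _ fun k => ?_).symm
      refine (Fintype.sum_equiv σ _ _ fun l => ?_)
      simp
    have step4 : (∑ k : Fin n, ∑ l : Fin n,
            (if k < l then c (σ k) (σ l) • (Pi.single (σ l) 1 : Fin n → ℝ) else 0))
        = (∑ j : Fin n, (∑ i ∈ Finset.univ.filter (· < j), c (σ i) (σ j)) •
            (Pi.single (σ j) 1 : Fin n → ℝ)) := by
      rw [Finset.sum_comm]
      refine Finset.sum_congr rfl fun l _ => ?_
      rw [← Finset.sum_filter, Finset.sum_smul]
    rw [step1, step2, step3, step4]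
  refine ⟨key, ?_⟩
  refine ⟨fun i j => if σ.symm j < σ.symm i then (1 : ℝ) else 0, fun i j => ?_, key.symm⟩
  by_cases h : σ.symm j < σ.symm i <;> simp [h]
end

section
/- For each permutation σ of {1,...,n}, the point v_σ = ∑_{j=2}^n (∑_{i<j} c_{σ_i σ_j}) e_{σ_j} satisfies the system x_{σ₁} = 0 and ∑_{a=1}^k x_{σ_a} = c_{{σ₁,...,σ_k}} for every k = 1,...,n, where c_J = ∑_{{i,j}⊆J} c_{ij}. Moreover v_σ satisfies x_J ≥ c_J for all subsets J ⊆ {1,...,n}. -/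
open Finset

lemma pair_half {α : Type*} [DecidableEq α] (s : Finset α) (f : α → α → ℝ)
    (hf : ∀ a b, f a b = f b a) (r : α → α → Prop) [DecidableRel r]
    (hr : ∀ a b, a ≠ b → (r a b ↔ ¬ r b a)) (hirr : ∀ a, ¬ r a a) :
    (∑ a ∈ s, ∑ b ∈ s, if r a b then f a b else 0) * 2
      = ∑ a ∈ s, ∑ b ∈ s, if a ≠ b then f a b else 0 := by
  rw [mul_two]
  nth_rewrite 2 [Finset.sum_comm]
  rw [← Finset.sum_add_distrib]
  refine Finset.sum_congr rfl fun a _ => ?_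
  rw [← Finset.sum_add_distrib]
  refine Finset.sum_congr rfl fun b _ => ?_
  by_cases hab : a = b
  · subst hab; simp [hirr a]
  · by_cases h : r a b
    · have h2 : ¬ r b a := (hr a b hab).mp h
      simp [h, h2, hab]
    · have h2 : r b a := by
        by_contra h3; exact h ((hr a b hab).mpr h3)
      simp [h, h2, hab, hf a b]

lemma lt_hr {α : Type*} [LinearOrder α] (a b : α) (hab : a ≠ b) :
    a < b ↔ ¬ b < a :=
  ⟨fun h h2 => absurd (h.trans h2) (lt_irrefl _),
   fun h => hab.lt_or_gt.resolve_right h⟩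

theorem stmt_6 (n : ℕ) (hn : 0 < n) (c : Fin n → Fin n → ℝ)
    (hsym : ∀ i j, c i j = c j i) (hnn : ∀ i j, 0 ≤ c i j)
    (σ : Equiv.Perm (Fin n)) (v : Fin n → ℝ)
    (hv : ∀ k, v k = ∑ i ∈ Finset.univ.filter (· < σ.symm k), c (σ i) k) :
    v (σ ⟨0, hn⟩) = 0 ∧
    (∀ k : Fin n, ∑ a ∈ Finset.univ.filter (· ≤ k), v (σ a)
        = ∑ i ∈ (Finset.univ.filter (· ≤ k)).image σ,
            ∑ j ∈ (Finset.univ.filter (· ≤ k)).image σ,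
              if i < j then c i j else 0) ∧
    ∀ J : Finset (Fin n),
      (∑ i ∈ J, ∑ j ∈ J, if i < j then c i j else 0) ≤ ∑ j ∈ J, v j := by
  have hvu : ∀ j : Fin n, v j = ∑ m : Fin n,
      if σ.symm m < σ.symm j then c m j else 0 := by
    intro j
    rw [hv j, Finset.sum_filter]
    exact (Equiv.sum_comp σ.symm (fun i => if i < σ.symm j then c (σ i) j else 0)).symm.trans
      (by simp)
  refine ⟨?_, ?_, ?_⟩
  · rw [hv]
    have : Finset.univ.filter (· < σ.symm (σ ⟨0, hn⟩)) = ∅ := by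
      simp only [Equiv.symm_apply_apply]
      ext i
      simp [Fin.le_def, Nat.le_zero, Fin.lt_def]
    rw [this, Finset.sum_empty]
  · intro k
    set s := Finset.univ.filter (· ≤ k) with hs
    have hL : ∑ a ∈ s, v (σ a)
        = ∑ a ∈ s, ∑ b ∈ s, if b < a then c (σ b) (σ a) else 0 := by
      refine Finset.sum_congr rfl fun a ha => ?_
      rw [hv, Equiv.symm_apply_apply]
      have hak : a ≤ k := by simpa [hs] using ha
      have : Finset.univ.filter (· < a) = s.filter (· < a) := by
        ext i
        simp only [hs, Finset.mem_filter, Finset.mem_univ, true_and]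
        exact ⟨fun h => ⟨le_trans h.le hak, h⟩, fun h => h.2⟩
      rw [this, Finset.sum_filter]
    have hR : ∑ i ∈ s.image σ, ∑ j ∈ s.image σ, (if i < j then c i j else 0)
        = ∑ a ∈ s, ∑ b ∈ s, if σ a < σ b then c (σ a) (σ b) else 0 := by
      rw [Finset.sum_image (fun a _ b _ h => σ.injective h)]
      refine Finset.sum_congr rfl fun a _ => ?_
      rw [Finset.sum_image (fun a _ b _ h => σ.injective h)]
    rw [hL, hR]
    have hf : ∀ a b : Fin n, c (σ a) (σ b) = c (σ b) (σ a) := fun a b => hsym _ _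
    have h1 := pair_half s (fun a b => c (σ a) (σ b)) hf (fun a b => b < a)
      (fun a b hab => lt_hr b a (Ne.symm hab)) (fun a => lt_irrefl a)
    have h2 := pair_half s (fun a b => c (σ a) (σ b)) hf (fun a b => σ a < σ b)
      (fun a b hab => lt_hr (σ a) (σ b) (fun he => hab (σ.injective he))) (fun a => lt_irrefl (σ a))
    have key : (∑ a ∈ s, ∑ b ∈ s, if b < a then c (σ b) (σ a) else 0) * 2
        = (∑ a ∈ s, ∑ b ∈ s, if σ a < σ b then c (σ a) (σ b) else 0) * 2 := by
      rw [h2, ← h1]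
      congr 1
      refine Finset.sum_congr rfl fun a _ => Finset.sum_congr rfl fun b _ => ?_
      by_cases h : b < a <;> simp [h, hsym]
    exact mul_right_cancel₀ two_ne_zero (id key)
  · intro J
    have step1 : (∑ j ∈ J, ∑ m ∈ J, if σ.symm m < σ.symm j then c m j else 0)
        ≤ ∑ j ∈ J, v j := by
      refine Finset.sum_le_sum fun j _ => ?_
      rw [hvu j]
      refine Finset.sum_le_sum_of_subset_of_nonneg (Finset.subset_univ J)
        fun m _ _ => ?_
      by_cases h : σ.symm m < σ.symm j <;> simp [h, hnn]
    refine le_trans (le_of_eq ?_) step1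
    have h1 := pair_half J c hsym (fun a b => a < b)
      (fun a b hab => lt_hr a b hab) (fun a => lt_irrefl a)
    have h2 := pair_half J c hsym (fun a b => σ.symm b < σ.symm a)
      (fun a b hab => lt_hr (σ.symm b) (σ.symm a) (fun he => hab (σ.symm.injective he.symm))) (fun a => lt_irrefl (σ.symm a))
    have e : (∑ j ∈ J, ∑ m ∈ J, if σ.symm m < σ.symm j then c m j else 0)
        = ∑ a ∈ J, ∑ b ∈ J, if σ.symm b < σ.symm a then c a b else 0 := by
      refine Finset.sum_congr rfl fun a _ => Finset.sum_congr rfl fun b _ => ?_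
      by_cases h : σ.symm b < σ.symm a <;> simp [h, hsym]
    rw [e]
    exact mul_right_cancel₀ two_ne_zero (h1.trans h2.symm)
end

section
/- The polytope Π = {x ∈ ℝ^n : x_{{1,...,n}} = c_{{1,...,n}} and x_J ≥ c_J for all nonempty proper J ⊆ {1,...,n}} equals the zonotope Z = ∑_{i<j} c_{ij}·[e_i, e_j] (Minkowski sum of dilated segments). -/
open Finset

variable {n : ℕ}

-- weight of edge set inside J
noncomputable def wsum (c : Fin n → Fin n → ℝ) (E : Finset (Fin n × Fin n)) (J : Finset (Fin n)) : ℝ :=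
  ∑ p ∈ E.filter (fun p => p.1 ∈ J ∧ p.2 ∈ J), c p.1 p.2

lemma wsum_eq_sum_ite (c : Fin n → Fin n → ℝ) (E : Finset (Fin n × Fin n)) (J : Finset (Fin n)) :
    wsum c E J = ∑ p ∈ E, if p.1 ∈ J ∧ p.2 ∈ J then c p.1 p.2 else 0 := by
  rw [wsum, Finset.sum_filter]

lemma eval_sum (c t : Fin n → Fin n → ℝ) (E : Finset (Fin n × Fin n)) (J : Finset (Fin n)) :
    ∑ k ∈ J, (∑ p ∈ E, c p.1 p.2 • (t p.1 p.2 • (Pi.single p.1 1 : Fin n → ℝ)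
      + (1 - t p.1 p.2) • (Pi.single p.2 1 : Fin n → ℝ))) k
    = ∑ p ∈ E, c p.1 p.2 * (t p.1 p.2 * (if p.1 ∈ J then 1 else 0)
        + (1 - t p.1 p.2) * (if p.2 ∈ J then 1 else 0)) := by
  simp only [Finset.sum_apply, Pi.add_apply, Pi.smul_apply, Pi.single_apply, smul_eq_mul]
  rw [Finset.sum_comm]
  refine Finset.sum_congr rfl fun p _ => ?_
  rw [← Finset.mul_sum]
  congr 1
  rw [Finset.sum_add_distrib, ← Finset.mul_sum, ← Finset.mul_sum,
    Finset.sum_ite_eq' J p.1 (fun _ => (1:ℝ)), Finset.sum_ite_eq' J p.2 (fun _ => (1:ℝ))]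

lemma main_lemma (c : Fin n → Fin n → ℝ) (hnn : ∀ i j, 0 ≤ c i j)
    (E : Finset (Fin n × Fin n)) (hE : ∀ p ∈ E, p.1 ≠ p.2) (x : Fin n → ℝ)
    (hsum : (∑ j, x j) = wsum c E univ)
    (hJ : ∀ J : Finset (Fin n), J.Nonempty → J ≠ univ → wsum c E J ≤ ∑ j ∈ J, x j) :
    ∃ t : Fin n → Fin n → ℝ, (∀ i j, 0 ≤ t i j ∧ t i j ≤ 1) ∧
      x = ∑ p ∈ E, c p.1 p.2 • (t p.1 p.2 • (Pi.single p.1 1 : Fin n → ℝ)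
        + (1 - t p.1 p.2) • (Pi.single p.2 1 : Fin n → ℝ)) := by
  induction E using Finset.induction_on generalizing x with
  | empty =>
    refine ⟨fun _ _ => 0, fun i j => ⟨le_refl _, zero_le_one⟩, ?_⟩
    rw [Finset.sum_empty]
    -- x = 0
    have h0 : (∑ j, x j) = 0 := by simpa [wsum] using hsum
    funext k
    by_cases hu : ({k} : Finset (Fin n)) = univ
    · have : ∑ j ∈ ({k} : Finset (Fin n)), x j = 0 := by rw [hu]; exact h0
      simpa using this
    · have h1 : (0:ℝ) ≤ x k := by
        have := hJ {k} (singleton_nonempty k) hu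
        simpa [wsum] using this
      have hne : (univ.erase k).Nonempty := by
        obtain ⟨m, hm1, hm2⟩ := Finset.exists_of_ssubset (Finset.ssubset_univ_iff.mpr hu)
        exact ⟨m, Finset.mem_erase.mpr ⟨by simpa using hm2, mem_univ m⟩⟩
      have h2 : (0:ℝ) ≤ ∑ j ∈ univ.erase k, x j := by
        have := hJ (univ.erase k) hne (by
          intro h
          have hk : k ∈ univ.erase k := by rw [h]; exact mem_univ k
          exact (Finset.mem_erase.mp hk).1 rfl)
        simpa [wsum] using this
      have h3 : x k + ∑ j ∈ univ.erase k, x j = 0 := by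
        rw [Finset.add_sum_erase _ _ (mem_univ k)]; exact h0
      show x k = 0
      linarith
  | @insert p E hp ih =>
    have hij : p.1 ≠ p.2 := hE p (mem_insert_self p E)
    have hE' : ∀ q ∈ E, q.1 ≠ q.2 := fun q hq => hE q (mem_insert_of_mem hq)
    -- wsum facts
    have hw : ∀ J : Finset (Fin n), ¬(p.1 ∈ J ∧ p.2 ∈ J) →
        wsum c (insert p E) J = wsum c E J := by
      intro J h
      unfold wsum
      rw [Finset.filter_insert, if_neg h]
    have hwin : ∀ J : Finset (Fin n), p.1 ∈ J → p.2 ∈ J →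
        wsum c (insert p E) J = c p.1 p.2 + wsum c E J := by
      intro J h1 h2
      unfold wsum
      rw [Finset.filter_insert, if_pos ⟨h1, h2⟩, Finset.sum_insert (by
        intro hmem
        exact hp (Finset.mem_of_mem_filter p hmem))]
    -- the two families
    have hFi : (univ.filter (fun J : Finset (Fin n) => p.1 ∈ J ∧ p.2 ∉ J)).Nonempty :=
      ⟨{p.1}, by simp [hij.symm]⟩
    have hFj : (univ.filter (fun J : Finset (Fin n) => p.2 ∈ J ∧ p.1 ∉ J)).Nonempty :=
      ⟨{p.2}, by simp [hij]⟩
    set A := (univ.filter (fun J : Finset (Fin n) => p.1 ∈ J ∧ p.2 ∉ J)).inf' hFi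
      (fun J => (∑ k ∈ J, x k) - wsum c E J) with hAdef
    set B := (univ.filter (fun J : Finset (Fin n) => p.2 ∈ J ∧ p.1 ∉ J)).inf' hFj
      (fun J => (∑ k ∈ J, x k) - wsum c E J) with hBdef
    -- generic bound for members of the families
    have hbound : ∀ J : Finset (Fin n), p.1 ∈ J ∨ p.2 ∈ J → ¬(p.1 ∈ J ∧ p.2 ∈ J) →
        wsum c E J ≤ ∑ k ∈ J, x k := by
      intro J hne hnb
      have hJne : J.Nonempty := by
        rcases hne with h | h
        exacts [⟨p.1, h⟩, ⟨p.2, h⟩]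
      have hJpr : J ≠ univ := by
        intro h
        exact hnb ⟨h ▸ mem_univ p.1, h ▸ mem_univ p.2⟩
      have := hJ J hJne hJpr
      rwa [hw J hnb] at this
    have hA0 : 0 ≤ A := by
      apply Finset.le_inf'
      intro J hJmem
      rw [Finset.mem_filter] at hJmem
      have := hbound J (Or.inl hJmem.2.1) (fun h => hJmem.2.2 h.2)
      linarith
    have hB0 : 0 ≤ B := by
      apply Finset.le_inf'
      intro J hJmem
      rw [Finset.mem_filter] at hJmem
      have := hbound J (Or.inr hJmem.2.1) (fun h => hJmem.2.2 h.1)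
      linarith
    -- inf achievers
    obtain ⟨J1, hJ1mem, hJ1⟩ := Finset.exists_mem_eq_inf' hFi
      (fun J => (∑ k ∈ J, x k) - wsum c E J)
    obtain ⟨J2, hJ2mem, hJ2⟩ := Finset.exists_mem_eq_inf' hFj
      (fun J => (∑ k ∈ J, x k) - wsum c E J)
    rw [Finset.mem_filter] at hJ1mem hJ2mem
    obtain ⟨-, h1i, h1j⟩ := hJ1mem
    obtain ⟨-, h2j, h2i⟩ := hJ2mem
    -- supermodularity
    have hsub : wsum c (insert p E) J1 + wsum c (insert p E) J2 + c p.1 p.2 ≤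
        wsum c (insert p E) (J1 ∪ J2) + wsum c (insert p E) (J1 ∩ J2) := by
      simp only [wsum_eq_sum_ite]
      have hcp : c p.1 p.2 = ∑ q ∈ insert p E, if q = p then c p.1 p.2 else 0 := by
        rw [Finset.sum_ite_eq' (insert p E) p (fun _ => c p.1 p.2),
          if_pos (mem_insert_self p E)]
      rw [hcp, ← Finset.sum_add_distrib, ← Finset.sum_add_distrib, ← Finset.sum_add_distrib]
      apply Finset.sum_le_sum
      intro q hq
      by_cases hqp : q = p
      · subst hqp
        simp only [if_pos rfl, Finset.mem_union, Finset.mem_inter]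
        rw [if_neg (fun h : q.1 ∈ J1 ∧ q.2 ∈ J1 => h1j h.2),
          if_neg (fun h : q.1 ∈ J2 ∧ q.2 ∈ J2 => h2i h.1),
          if_pos (show (q.1 ∈ J1 ∨ q.1 ∈ J2) ∧ (q.2 ∈ J1 ∨ q.2 ∈ J2) from
            ⟨Or.inl h1i, Or.inr h2j⟩),
          if_neg (fun h : (q.1 ∈ J1 ∧ q.1 ∈ J2) ∧ q.2 ∈ J1 ∧ q.2 ∈ J2 => h1j h.2.1)]
        simp only [if_true]
        linarith
      · rw [if_neg hqp, add_zero]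
        simp only [Finset.mem_union, Finset.mem_inter]
        by_cases ha : q.1 ∈ J1 <;> by_cases hb : q.2 ∈ J1 <;>
          by_cases hc : q.1 ∈ J2 <;> by_cases hd : q.2 ∈ J2 <;>
          simp only [ha, hb, hc, hd, and_true, and_false, true_and, false_and,
            true_or, or_true, false_or, or_false, if_true, if_false] <;>
          linarith [hnn q.1 q.2]
    -- A + B ≥ c p.1 p.2
    have hAB : c p.1 p.2 ≤ A + B := by
      have hxsum : (∑ k ∈ J1 ∪ J2, x k) + (∑ k ∈ J1 ∩ J2, x k)
          = (∑ k ∈ J1, x k) + (∑ k ∈ J2, x k) := Finset.sum_union_inter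
      have hU : wsum c (insert p E) (J1 ∪ J2) ≤ ∑ k ∈ J1 ∪ J2, x k := by
        by_cases hu : J1 ∪ J2 = univ
        · rw [hu, ← hsum]
        · exact hJ _ ⟨p.1, Finset.mem_union.mpr (Or.inl h1i)⟩ hu
      have hI : wsum c (insert p E) (J1 ∩ J2) ≤ ∑ k ∈ J1 ∩ J2, x k := by
        rcases Finset.eq_empty_or_nonempty (J1 ∩ J2) with he | hne
        · rw [he]
          simp [wsum]
        · refine hJ _ hne (fun h => ?_)
          have : p.2 ∈ J1 ∩ J2 := h ▸ mem_univ p.2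
          exact h1j (Finset.mem_inter.mp this).1
      have e1 : wsum c (insert p E) J1 = wsum c E J1 := hw _ (fun h => h1j h.2)
      have e2 : wsum c (insert p E) J2 = wsum c E J2 := hw _ (fun h => h2i h.1)
      have hA1 : A = (∑ k ∈ J1, x k) - wsum c E J1 := hJ1
      have hB1 : B = (∑ k ∈ J2, x k) - wsum c E J2 := hJ2
      linarith
    -- the split value
    set s := min (c p.1 p.2) A with hsdef
    have hs0 : 0 ≤ s := le_min (hnn p.1 p.2) hA0
    have hs1 : s ≤ c p.1 p.2 := min_le_left _ _
    have hs2 : s ≤ A := min_le_right _ _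
    have hs3 : c p.1 p.2 - s ≤ B := by
      rcases le_total (c p.1 p.2) A with h | h
      · rw [hsdef, min_eq_left h]; linarith
      · rw [hsdef, min_eq_right h]; linarith
    -- residual vector
    set x' : Fin n → ℝ := fun k => x k - (if k = p.1 then s else 0)
      - (if k = p.2 then c p.1 p.2 - s else 0) with hx'def
    have hx'sum : ∀ J : Finset (Fin n), ∑ k ∈ J, x' k
        = (∑ k ∈ J, x k) - (if p.1 ∈ J then s else 0)
          - (if p.2 ∈ J then c p.1 p.2 - s else 0) := by
      intro J
      rw [hx'def]
      simp only [Finset.sum_sub_distrib]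
      rw [Finset.sum_ite_eq' J p.1 (fun _ => s), Finset.sum_ite_eq' J p.2
        (fun _ => c p.1 p.2 - s)]
    have hsum' : (∑ j, x' j) = wsum c E univ := by
      rw [hx'sum, if_pos (mem_univ p.1), if_pos (mem_univ p.2), hsum,
        hwin univ (mem_univ p.1) (mem_univ p.2)]
      ring
    have hJ' : ∀ J : Finset (Fin n), J.Nonempty → J ≠ univ →
        wsum c E J ≤ ∑ j ∈ J, x' j := by
      intro J hne hpr
      rw [hx'sum]
      by_cases h1 : p.1 ∈ J <;> by_cases h2 : p.2 ∈ J
      · rw [if_pos h1, if_pos h2]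
        have := hJ J hne hpr
        rw [hwin J h1 h2] at this
        linarith
      · rw [if_pos h1, if_neg h2]
        have hAle : A ≤ (∑ k ∈ J, x k) - wsum c E J :=
          Finset.inf'_le _ (Finset.mem_filter.mpr ⟨mem_univ J, h1, h2⟩)
        linarith
      · rw [if_neg h1, if_pos h2]
        have hBle : B ≤ (∑ k ∈ J, x k) - wsum c E J :=
          Finset.inf'_le _ (Finset.mem_filter.mpr ⟨mem_univ J, h2, h1⟩)
        linarith
      · rw [if_neg h1, if_neg h2]
        have := hJ J hne hpr
        rw [hw J (fun h => h1 h.1)] at this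
        linarith
    obtain ⟨t', ht', hxdec⟩ := ih hE' x' hsum' hJ'
    -- extend t
    set tv : ℝ := if c p.1 p.2 = 0 then 0 else s / c p.1 p.2 with htvdef
    have hcpos : c p.1 p.2 ≠ 0 → 0 < c p.1 p.2 :=
      fun h => lt_of_le_of_ne (hnn p.1 p.2) (Ne.symm h)
    have htv0 : 0 ≤ tv := by
      rw [htvdef]
      split_ifs with h
      · exact le_refl 0
      · exact div_nonneg hs0 (hnn p.1 p.2)
    have htv1 : tv ≤ 1 := by
      rw [htvdef]
      split_ifs with h
      · exact zero_le_one
      · exact (div_le_one (hcpos h)).mpr hs1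
    refine ⟨fun a b => if (a, b) = p then tv else t' a b, ?_, ?_⟩
    · intro a b
      dsimp only
      split_ifs
      · exact ⟨htv0, htv1⟩
      · exact ht' a b
    · rw [Finset.sum_insert hp]
      have htail : (∑ q ∈ E, c q.1 q.2 •
            ((if (q.1, q.2) = p then tv else t' q.1 q.2) • (Pi.single q.1 1 : Fin n → ℝ)
              + (1 - if (q.1, q.2) = p then tv else t' q.1 q.2) •
                (Pi.single q.2 1 : Fin n → ℝ)))
          = ∑ q ∈ E, c q.1 q.2 • (t' q.1 q.2 • (Pi.single q.1 1 : Fin n → ℝ)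
              + (1 - t' q.1 q.2) • (Pi.single q.2 1 : Fin n → ℝ)) := by
        refine Finset.sum_congr rfl fun q hq => ?_
        have hne : ((q.1, q.2) : Fin n × Fin n) ≠ p := fun h => hp (h ▸ hq)
        rw [if_neg hne]
      show x = c p.1 p.2 • ((if (p.1, p.2) = p then tv else t' p.1 p.2) •
          (Pi.single p.1 1 : Fin n → ℝ)
          + (1 - if (p.1, p.2) = p then tv else t' p.1 p.2) •
            (Pi.single p.2 1 : Fin n → ℝ)) + _
      rw [htail, ← hxdec, if_pos rfl]
      funext k
      simp only [Pi.add_apply, Pi.smul_apply, Pi.single_apply, smul_eq_mul, hx'def]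
      rcases eq_or_ne (c p.1 p.2) 0 with hc0 | hc0
      · have hs' : s = 0 := le_antisymm (hc0 ▸ hs1) hs0
        rw [htvdef]
        simp [hc0, hs']
      · rw [htvdef, if_neg hc0]
        split_ifs with hk1 hk2
        · exact absurd (hk1.symm.trans hk2) hij
        · field_simp
          ring
        · field_simp
          ring
        · ring


lemma sumJ_pairs {M : Type*} [AddCommMonoid M] (f : Fin n → Fin n → M) (J : Finset (Fin n)) :
    (∑ i ∈ J, ∑ j ∈ J, if i < j then f i j else 0)
      = ∑ p ∈ (univ.filter (fun p : Fin n × Fin n => p.1 < p.2)).filter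
          (fun p => p.1 ∈ J ∧ p.2 ∈ J), f p.1 p.2 := by
  rw [← Finset.sum_product', ← Finset.sum_filter]
  apply Finset.sum_congr _ (fun _ _ => rfl)
  ext p
  simp only [Finset.mem_filter, Finset.mem_product, Finset.mem_univ, true_and]
  tauto

lemma pairs_univ {M : Type*} [AddCommMonoid M] (f : Fin n → Fin n → M) :
    (∑ i : Fin n, ∑ j : Fin n, if i < j then f i j else 0)
      = ∑ p ∈ univ.filter (fun p : Fin n × Fin n => p.1 < p.2), f p.1 p.2 := by
  rw [sumJ_pairs f univ, Finset.filter_true_of_mem (fun p _ => by simp)]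

theorem stmt_7 (n : ℕ) (c : Fin n → Fin n → ℝ)
    (hsym : ∀ i j, c i j = c j i) (hnn : ∀ i j, 0 ≤ c i j) :
    {x : Fin n → ℝ |
        (∑ j, x j) = (∑ i : Fin n, ∑ j : Fin n, if i < j then c i j else 0) ∧
        ∀ J : Finset (Fin n), J.Nonempty → J ≠ Finset.univ →
          (∑ i ∈ J, ∑ j ∈ J, if i < j then c i j else 0) ≤ ∑ j ∈ J, x j} =
      {x : Fin n → ℝ | ∃ t : Fin n → Fin n → ℝ,
        (∀ i j, 0 ≤ t i j ∧ t i j ≤ 1) ∧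
        x = ∑ i : Fin n, ∑ j : Fin n,
          if i < j then c i j • (t i j • (Pi.single i 1 : Fin n → ℝ)
            + (1 - t i j) • (Pi.single j 1 : Fin n → ℝ)) else 0} := by
  ext x
  simp only [Set.mem_setOf_eq]
  have hE₀ne : ∀ p ∈ univ.filter (fun p : Fin n × Fin n => p.1 < p.2), p.1 ≠ p.2 :=
    fun p hp => ne_of_lt (Finset.mem_filter.mp hp).2
  have hwJ : ∀ J : Finset (Fin n), (∑ i ∈ J, ∑ j ∈ J, if i < j then c i j else 0)
      = wsum c (univ.filter (fun p : Fin n × Fin n => p.1 < p.2)) J :=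
    fun J => sumJ_pairs c J
  constructor
  · rintro ⟨h1, h2⟩
    obtain ⟨t, ht, hx⟩ := main_lemma c hnn
      (univ.filter (fun p : Fin n × Fin n => p.1 < p.2)) hE₀ne x
      (by rw [h1, hwJ univ])
      (fun J hne hpr => by rw [← hwJ J]; exact h2 J hne hpr)
    refine ⟨t, ht, ?_⟩
    rw [hx, pairs_univ (fun i j => c i j • (t i j • (Pi.single i 1 : Fin n → ℝ)
      + (1 - t i j) • (Pi.single j 1 : Fin n → ℝ)))]
  · rintro ⟨t, ht, hx⟩
    rw [pairs_univ (fun i j => c i j • (t i j • (Pi.single i 1 : Fin n → ℝ)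
      + (1 - t i j) • (Pi.single j 1 : Fin n → ℝ)))] at hx
    constructor
    · rw [hwJ univ, hx, eval_sum, wsum_eq_sum_ite]
      refine Finset.sum_congr rfl fun p hp => ?_
      simp only [Finset.mem_univ, if_true, and_self]
      ring
    · intro J hne hpr
      rw [hwJ J, hx, eval_sum, wsum_eq_sum_ite]
      apply Finset.sum_le_sum
      intro p hp
      obtain ⟨ht0, ht1⟩ := ht p.1 p.2
      have hc := hnn p.1 p.2
      by_cases h1 : p.1 ∈ J <;> by_cases h2 : p.2 ∈ J <;>
        simp only [h1, h2, and_self, and_true, true_and, and_false, false_and,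
          if_true, if_false, mul_one, mul_zero, add_zero, zero_add]
      · nlinarith
      · positivity
      · have : 0 ≤ 1 - t p.1 p.2 := by linarith
        positivity
      · simp
end

section
/- For real (or field) variables y₁,...,y_m with all cyclic consecutive differences nonzero, the cyclic sum vanishes: ∑_{k=0}^{m-1} 1/∏_{i=1}^{m-1}(y_{σ^k(i)} - y_{σ^k(i+1)}) = 0, where σ is the cyclic shift i ↦ i+1 mod m. Equivalently, 1/((y₁-y₂)⋯(y_{m-1}-y_m)) + 1/((y₂-y₃)⋯(y_m-y₁)) + ⋯ + 1/((y_m-y₁)⋯(y_{m-2}-y_{m-1})) = 0. -/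
lemma zmod_sum_range {M : Type*} [AddCommMonoid M] (m : ℕ) [NeZero m] (f : ZMod m → M) :
    ∑ k ∈ Finset.range m, f (k : ZMod m) = ∑ j : ZMod m, f j := by
  apply Finset.sum_nbij' (fun k => ((k : ℕ) : ZMod m)) (fun j => j.val)
  · intro k _; exact Finset.mem_univ _
  · intro j _; exact Finset.mem_range.mpr (ZMod.val_lt j)
  · intro k hk; exact ZMod.val_cast_of_lt (Finset.mem_range.mp hk)
  · intro j _; exact ZMod.natCast_rightInverse j
  · intro k _; rfl

lemma zmod_prod_range (m : ℕ) [NeZero m] (f : ZMod m → ℝ) :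
    ∏ k ∈ Finset.range m, f (k : ZMod m) = ∏ j : ZMod m, f j := by
  apply Finset.prod_nbij' (fun k => ((k : ℕ) : ZMod m)) (fun j => j.val)
  · intro k _; exact Finset.mem_univ _
  · intro j _; exact Finset.mem_range.mpr (ZMod.val_lt j)
  · intro k hk; exact ZMod.val_cast_of_lt (Finset.mem_range.mp hk)
  · intro j _; exact ZMod.natCast_rightInverse j
  · intro k _; rfl

theorem stmt_11 (m : ℕ) (hm : 2 ≤ m) (y : ZMod m → ℝ)
    (hy : ∀ j : ZMod m, y j ≠ y (j + 1)) :
    ∑ k ∈ Finset.range m,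
      (∏ i ∈ Finset.range (m - 1),
        (y ((k + i : ℕ) : ZMod m) - y ((k + i + 1 : ℕ) : ZMod m)))⁻¹ = 0 := by
  obtain ⟨n, rfl⟩ : ∃ n, m = n + 1 := ⟨m - 1, by omega⟩
  haveI : NeZero (n + 1) := ⟨Nat.succ_ne_zero n⟩
  simp only [Nat.add_sub_cancel]
  set d : ZMod (n + 1) → ℝ := fun j => y j - y (j + 1) with hd
  have hdne : ∀ j, d j ≠ 0 := fun j => sub_ne_zero.mpr (hy j)
  have hP : (∏ j : ZMod (n + 1), d j) ≠ 0 :=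
    Finset.prod_ne_zero_iff.mpr fun j _ => hdne j
  have hsum : ∑ j : ZMod (n + 1), d j = 0 := by
    simp only [hd, Finset.sum_sub_distrib]
    rw [sub_eq_zero]
    exact (Fintype.sum_equiv (Equiv.addRight 1) _ _ (fun j => rfl)).symm
  have key : ∀ k ∈ Finset.range (n + 1),
      (∏ i ∈ Finset.range n,
        (y ((k + i : ℕ) : ZMod (n + 1)) - y ((k + i + 1 : ℕ) : ZMod (n + 1))))⁻¹
      = d ((k : ZMod (n + 1)) + (n : ZMod (n + 1))) * (∏ j : ZMod (n + 1), d j)⁻¹ := by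
    intro k _
    have hterm : ∀ i : ℕ,
        y ((k + i : ℕ) : ZMod (n + 1)) - y ((k + i + 1 : ℕ) : ZMod (n + 1))
          = d ((k : ZMod (n + 1)) + (i : ZMod (n + 1))) := by
      intro i; simp only [hd]; push_cast; ring_nf
    have hfull : ∏ i ∈ Finset.range (n + 1), d ((k : ZMod (n + 1)) + (i : ZMod (n + 1)))
        = ∏ j : ZMod (n + 1), d j := by
      rw [zmod_prod_range (n + 1) (fun j => d ((k : ZMod (n + 1)) + j))]
      exact Fintype.prod_equiv (Equiv.addLeft (k : ZMod (n + 1))) _ _ (fun j => rfl)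
    have hp : ∏ i ∈ Finset.range n, d ((k : ZMod (n + 1)) + (i : ZMod (n + 1)))
        = (∏ j : ZMod (n + 1), d j) / d ((k : ZMod (n + 1)) + (n : ZMod (n + 1))) := by
      rw [← hfull, Finset.prod_range_succ, mul_div_cancel_right₀ _ (hdne _)]
    simp only [hterm]
    rw [hp, inv_div, div_eq_mul_inv]
  rw [Finset.sum_congr rfl key, ← Finset.sum_mul]
  have h0 : ∑ k ∈ Finset.range (n + 1),
      d ((k : ZMod (n + 1)) + (n : ZMod (n + 1))) = 0 := by
    rw [zmod_sum_range (n + 1) (fun j => d (j + (n : ZMod (n + 1)))), ← hsum]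
    exact Fintype.sum_equiv (Equiv.addRight ((n : ℕ) : ZMod (n + 1))) _ _ (fun j => rfl)
  rw [h0, zero_mul]
end
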